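/- Let (X, d) be a metric space equipped with a Borel probability measure γ, let x_1, …, x_n ∈ X, let ε > 0, and let U_1, …, U_n be pairwise disjoint measurable sets covering X with γ(U_i) = 1/n and U_i ⊆ {x ∈ X : d(x, x_i) ≤ ε} for each i. For f ∈ L²(γ) define Pf(x_i) := n ∫_{U_i} f dγ. Then for every h > 0: (1/n²) Σ_{i=1}^n Σ_{j=1}^n 1{d(x_i,x_j) < h} |Pf(x_i) − Pf(x_j)|² ≤ ∬_{{(x,y) : d(x,y) < h + 2ε}} |f(x) − f(y)|² dγ(x) dγ(y). -/

import Mathlib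

open MeasureTheory

lemma sq_integral_le {X : Type*} [MeasurableSpace X] (μ : Measure X) [IsFiniteMeasure μ]
    (φ : X → ℝ) (hφ : Integrable φ μ) (hφ2 : Integrable (fun x => (φ x)^2) μ) :
    (∫ x, φ x ∂μ)^2 ≤ (μ Set.univ).toReal * ∫ x, (φ x)^2 ∂μ := by
  set m := (μ Set.univ).toReal with hm
  have hm0 : 0 ≤ m := ENNReal.toReal_nonneg
  set I := ∫ x, φ x ∂μ with hI
  set J := ∫ x, (φ x)^2 ∂μ with hJ
  have key : 0 ≤ ∫ x, (m * φ x - I)^2 ∂μ := integral_nonneg fun x => sq_nonneg _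
  have expand : ∫ x, (m * φ x - I)^2 ∂μ = m^2 * J - 2*m*I*I + I^2 * m := by
    have e : (fun x => (m * φ x - I)^2) = fun x => m^2 * (φ x)^2 - (2*m*I) * φ x + I^2 := by
      funext x; ring
    have h1 : Integrable (fun x => m^2 * (φ x)^2 - (2*m*I) * φ x) μ :=
      (hφ2.const_mul _).sub (hφ.const_mul _)
    have h2 : Integrable (fun x => m^2 * (φ x)^2) μ := hφ2.const_mul _
    have h3 : Integrable (fun x => (2*m*I) * φ x) μ := hφ.const_mul _
    rw [e, integral_add h1 (integrable_const _),
      integral_sub h2 h3, integral_const_mul, integral_const_mul,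
      integral_const, measureReal_def, smul_eq_mul, ← hI, ← hJ, ← hm]
    ring
  rw [expand] at key
  rcases eq_or_lt_of_le hm0 with h0 | h0
  · have hμ : μ = 0 := by
      have : μ Set.univ = 0 := by
        have := (ENNReal.toReal_eq_zero_iff _).mp h0.symm
        rcases this with h | h
        · exact h
        · exact absurd h (measure_ne_top μ _)
      exact Measure.measure_univ_eq_zero.mp this
    simp [hI, hJ, hμ, hm, integral_zero_measure]
  · nlinarith [key]

lemma lsc_ball_integral {X : Type*} [MetricSpace X] [MeasurableSpace X] [BorelSpace X]
    (γ : Measure X) (φ : X → ℝ) (hφ : Integrable φ γ) (hφ0 : ∀ x, 0 ≤ φ x) (C : ℝ) :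
    LowerSemicontinuous (fun a => ∫ b in Metric.ball a C, φ b ∂γ) := by
  intro a t ht
  set s : ℕ → Set X := fun k => Metric.ball a (C - 1/(k+1)) with hs
  have hsm : ∀ k, MeasurableSet (s k) := fun k => Metric.isOpen_ball.measurableSet
  have hmono : Monotone s := by
    intro k l hkl
    apply Metric.ball_subset_ball
    have h1 : (1:ℝ)/(l+1) ≤ 1/(k+1) := by
      apply one_div_le_one_div_of_le (by positivity)
      have : (k:ℝ) ≤ l := by exact_mod_cast hkl
      linarith
    linarith
  have hUnion : ⋃ k, s k = Metric.ball a C := by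
    ext b
    simp only [Set.mem_iUnion, Metric.mem_ball, hs]
    constructor
    · rintro ⟨k, hk⟩
      have : (0:ℝ) < 1/((k:ℝ)+1) := by positivity
      linarith
    · intro hb
      obtain ⟨k, hk⟩ := exists_nat_one_div_lt (sub_pos.2 hb)
      exact ⟨k, by linarith⟩
  have hint : IntegrableOn φ (⋃ k, s k) γ := hφ.integrableOn
  have htend := tendsto_setIntegral_of_monotone hsm hmono hint
  rw [hUnion] at htend
  obtain ⟨k, hk⟩ := (htend.eventually (eventually_gt_nhds ht)).exists
  have hnbhd : Metric.ball a (1/(k+1)) ∈ nhds a := Metric.ball_mem_nhds a (by positivity)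
  filter_upwards [hnbhd] with a' ha'
  refine lt_of_lt_of_le hk ?_
  apply setIntegral_mono_set hφ.integrableOn (Filter.Eventually.of_forall fun b => hφ0 b)
  apply HasSubset.Subset.eventuallyLE
  intro b hb
  rw [Metric.mem_ball] at hb ha' ⊢
  have h1 : dist a a' < 1/((k:ℝ)+1) := by rw [dist_comm]; exact ha'
  calc dist b a' ≤ dist b a + dist a a' := dist_triangle b a a'
    _ < (C - 1/((k:ℝ)+1)) + 1/((k:ℝ)+1) := add_lt_add hb h1
    _ = C := by ring

lemma meas_ball_integral {X : Type*} [MetricSpace X] [MeasurableSpace X] [BorelSpace X]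
    (γ : Measure X) (φ : X → ℝ) (hφ : Integrable φ γ) (C : ℝ) :
    Measurable (fun a => ∫ b in Metric.ball a C, φ b ∂γ) := by
  have hp := (lsc_ball_integral γ (fun x => max (φ x) 0) hφ.pos_part
    (fun x => le_max_right _ _) C).measurable
  have hn := (lsc_ball_integral γ (fun x => max (-φ x) 0) hφ.neg_part
    (fun x => le_max_right _ _) C).measurable
  have he : (fun a => ∫ b in Metric.ball a C, φ b ∂γ)
      = fun a => (∫ b in Metric.ball a C, max (φ b) 0 ∂γ)
        - ∫ b in Metric.ball a C, max (-φ b) 0 ∂γ := by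
    funext a
    rw [← integral_sub hφ.pos_part.integrableOn hφ.neg_part.integrableOn]
    exact setIntegral_congr_fun Metric.isOpen_ball.measurableSet fun b _ =>
      (max_zero_sub_max_neg_zero_eq_self (φ b)).symm
  rw [he]
  exact hp.sub hn

set_option maxHeartbeats 1000000 in
theorem stmt_9_main {X : Type*} [MetricSpace X] [MeasurableSpace X] [BorelSpace X]
    (γ : Measure X) [IsProbabilityMeasure γ]
    (n : ℕ) (x : Fin n → X) (ε : ℝ) (hε : 0 < ε)
    (U : Fin n → Set X) (hUmeas : ∀ i, MeasurableSet (U i))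
    (hUdisj : Pairwise (Function.onFun Disjoint U))
    (hUcover : (⋃ i, U i) = Set.univ)
    (hUmass : ∀ i, γ (U i) = 1 / n)
    (hUball : ∀ i, U i ⊆ Metric.closedBall (x i) ε)
    (f : X → ℝ) (hf : MemLp f 2 γ) (hfm : Measurable f) (h : ℝ) (hh : 0 < h) :
    (1 / (n : ℝ) ^ 2) * ∑ i, ∑ j,
        (if dist (x i) (x j) < h then (1 : ℝ) else 0) *
          ((n : ℝ) * ∫ z in U i, f z ∂γ - (n : ℝ) * ∫ z in U j, f z ∂γ) ^ 2
      ≤ ∫ a, ∫ b in {b | dist a b < h + 2 * ε}, (f a - f b) ^ 2 ∂γ ∂γ := by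
  classical
  have hn : 0 < n := by
    rcases Nat.eq_zero_or_pos n with h0 | h0
    · exfalso
      subst h0
      have he : (⋃ i : Fin 0, U i) = (∅ : Set X) := by simp
      rw [he] at hUcover
      have h1 : γ Set.univ = 1 := measure_univ
      rw [← hUcover] at h1
      simp at h1
    · exact h0
  have hnR : (0:ℝ) < n := by exact_mod_cast hn
  set C := h + 2*ε with hC
  have hCpos : 0 < C := by rw [hC]; linarith
  have hf1 : Integrable f γ := hf.integrable one_le_two
  have hf2 : Integrable (fun z => f z ^ 2) γ := hf.integrable_sq
  have hUr : ∀ i, (γ (U i)).toReal = 1/(n:ℝ) := by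
    intro i
    rw [hUmass i]
    simp [ENNReal.toReal_div]
  have hga : ∀ a : X, Integrable (fun b => (f a - f b)^2) γ := by
    intro a
    have e : (fun b => (f a - f b)^2) = fun b => ((f a)^2 - (2*f a) * f b) + f b^2 := by
      funext b; ring
    rw [e]
    exact ((integrable_const _).sub (hf1.const_mul _)).add hf2
  set c : Fin n → ℝ := fun j => ∫ z in U j, f z ∂γ with hc
  set d : Fin n → ℝ := fun j => ∫ z in U j, f z ^ 2 ∂γ with hd
  set ψ : Fin n → X → ℝ := fun j a => f a ^ 2 * (1/(n:ℝ)) - 2 * f a * c j + d j with hψdef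
  have hconst_int : ∀ (r : ℝ) (s : Set X), IntegrableOn (fun _ : X => r) s γ :=
    fun r s => integrableOn_const (measure_ne_top γ s)
  have hψ : ∀ (j : Fin n) (a : X), ∫ b in U j, (f a - f b)^2 ∂γ = ψ j a := by
    intro j a
    calc ∫ b in U j, (f a - f b)^2 ∂γ
        = ∫ b in U j, ((f a ^ 2 - (2 * f a) * f b) + f b ^ 2) ∂γ := by
          apply setIntegral_congr_fun (hUmeas j); intro b _; ring
      _ = (∫ b in U j, (f a ^ 2 - (2 * f a) * f b) ∂γ) + ∫ b in U j, f b ^ 2 ∂γ := by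
          have hi1 : IntegrableOn (fun b => f a ^ 2 - (2 * f a) * f b) (U j) γ :=
            (hconst_int (f a ^ 2) (U j)).sub (hf1.integrableOn.const_mul (2 * f a))
          exact integral_add hi1 hf2.integrableOn
      _ = ((∫ _ in U j, (f a ^ 2 : ℝ) ∂γ) - ∫ b in U j, (2 * f a) * f b ∂γ) + d j := by
          have hi2 : IntegrableOn (fun b => (2 * f a) * f b) (U j) γ :=
            hf1.integrableOn.const_mul (2 * f a)
          rw [integral_sub (hconst_int (f a ^ 2) (U j)) hi2]
      _ = ψ j a := by
          rw [setIntegral_const, measureReal_def, integral_const_mul, hUr j, smul_eq_mul]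
          simp only [hψdef]
          ring
  have hψ_int : ∀ j : Fin n, Integrable (ψ j) γ := by
    intro j
    have e : ψ j = fun a => (f a ^ 2 * (1/(n:ℝ)) - (2 * c j) * f a) + d j := by
      funext a; simp only [hψdef]; ring
    rw [e]
    exact ((hf2.mul_const _).sub (hf1.const_mul _)).add (integrable_const _)
  -- Step 3: Jensen per pair
  have key : ∀ i j : Fin n,
      (1/(n:ℝ)^2) * ((n:ℝ) * c i - (n:ℝ) * c j)^2 ≤ ∫ a in U i, ψ j a ∂γ := by
    intro i j
    set φ : X → ℝ := fun a => f a * (1/(n:ℝ)) - c j with hφdef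
    have hφint : IntegrableOn φ (U i) γ :=
      (hf1.integrableOn.mul_const (1/(n:ℝ))).sub (hconst_int (c j) (U i))
    have hφ2int : IntegrableOn (fun a => (φ a)^2) (U i) γ := by
      have e : (fun a => (φ a)^2)
          = fun a => ((f a ^ 2) * (1/(n:ℝ))^2 - (2 * c j * (1/(n:ℝ))) * f a) + (c j)^2 := by
        funext a; simp only [hφdef]; ring
      rw [e]
      have hi3 : IntegrableOn (fun a => f a ^ 2 * (1/(n:ℝ))^2 - (2 * c j * (1/(n:ℝ))) * f a) (U i) γ :=
        (hf2.integrableOn.mul_const ((1/(n:ℝ))^2)).sub (hf1.integrableOn.const_mul (2 * c j * (1/(n:ℝ))))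
      exact hi3.add (hconst_int ((c j)^2) (U i))
    have hjensen1 := sq_integral_le (γ.restrict (U i)) φ hφint hφ2int
    rw [Measure.restrict_apply_univ, hUr i] at hjensen1
    have hφval : ∫ a in U i, φ a ∂γ = (c i - c j) * (1/(n:ℝ)) := by
      simp only [hφdef]
      have hi4 : IntegrableOn (fun a => f a * (1/(n:ℝ))) (U i) γ :=
        hf1.integrableOn.mul_const (1/(n:ℝ))
      rw [integral_sub hi4 (hconst_int (c j) (U i)),
        integral_mul_const, setIntegral_const, measureReal_def, hUr i, smul_eq_mul]
      ring
    rw [hφval] at hjensen1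
    have hpoint : ∀ a : X, (φ a)^2 ≤ (1/(n:ℝ)) * ψ j a := by
      intro a
      have hsub_int : Integrable (fun b => f a - f b) (γ.restrict (U j)) :=
        (hconst_int (f a) (U j)).sub hf1.integrableOn
      have hsub2 : Integrable (fun b => (f a - f b)^2) (γ.restrict (U j)) :=
        (hga a).integrableOn
      have hj := sq_integral_le (γ.restrict (U j)) (fun b => f a - f b) hsub_int hsub2
      rw [Measure.restrict_apply_univ, hUr j, hψ j a] at hj
      have hval : ∫ b in U j, (f a - f b) ∂γ = φ a := by
        rw [integral_sub (hconst_int (f a) (U j)) hf1.integrableOn, setIntegral_const, measureReal_def, hUr j,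
          smul_eq_mul]
        simp only [hφdef]
        ring
      rw [hval] at hj
      exact hj
    have hmono2 : ∫ a in U i, (φ a)^2 ∂γ ≤ ∫ a in U i, (1/(n:ℝ)) * ψ j a ∂γ :=
      integral_mono hφ2int ((hψ_int j).integrableOn.const_mul _) fun a => hpoint a
    rw [integral_const_mul] at hmono2
    have hinv : (0:ℝ) < 1/(n:ℝ) := by positivity
    have h5 : ((c i - c j) * (1/(n:ℝ)))^2 ≤ (1/(n:ℝ)) * ((1/(n:ℝ)) * ∫ a in U i, ψ j a ∂γ) :=
      hjensen1.trans (mul_le_mul_of_nonneg_left hmono2 hinv.le)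
    have hexp : ((c i - c j) * (1/(n:ℝ)))^2 = (c i - c j)^2 * (1/(n:ℝ))^2 := by ring
    have htgt : (1/(n:ℝ)^2) * ((n:ℝ) * c i - (n:ℝ) * c j)^2 = (c i - c j)^2 := by
      field_simp
    rw [htgt]
    have h6 : (c i - c j)^2 * (1/(n:ℝ))^2 ≤ (∫ a in U i, ψ j a ∂γ) * (1/(n:ℝ))^2 := by
      calc (c i - c j)^2 * (1/(n:ℝ))^2 = ((c i - c j) * (1/(n:ℝ)))^2 := by ring
        _ ≤ (1/(n:ℝ)) * ((1/(n:ℝ)) * ∫ a in U i, ψ j a ∂γ) := h5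
        _ = (∫ a in U i, ψ j a ∂γ) * (1/(n:ℝ))^2 := by ring
    exact le_of_mul_le_mul_right h6 (by positivity)
  -- Step 4
  have step4 : (1 / (n : ℝ) ^ 2) * ∑ i, ∑ j,
        (if dist (x i) (x j) < h then (1 : ℝ) else 0) * ((n:ℝ) * c i - (n:ℝ) * c j)^2
      ≤ ∑ i, ∫ a in U i,
          (∑ j, (if dist (x i) (x j) < h then (1:ℝ) else 0) * ψ j a) ∂γ := by
    rw [Finset.mul_sum]
    apply Finset.sum_le_sum
    intro i _
    rw [integral_finset_sum _ (fun j _ => ((hψ_int j).integrableOn.const_mul _ :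
      IntegrableOn (fun a => (if dist (x i) (x j) < h then (1:ℝ) else 0) * ψ j a) (U i) γ)),
      Finset.mul_sum]
    apply Finset.sum_le_sum
    intro j _
    by_cases hij : dist (x i) (x j) < h
    · simp only [hij, if_true, one_mul]
      exact key i j
    · simp [hij]
  -- Step 5
  have step5 : ∀ i : Fin n, ∀ a ∈ U i,
      (∑ j, (if dist (x i) (x j) < h then (1:ℝ) else 0) * ψ j a)
        ≤ ∫ b in Metric.ball a C, (f a - f b)^2 ∂γ := by
    intro i a ha
    set T : Finset (Fin n) := Finset.univ.filter (fun j => dist (x i) (x j) < h) with hT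
    have e1 : (∑ j, (if dist (x i) (x j) < h then (1:ℝ) else 0) * ψ j a)
        = ∑ j ∈ T, ψ j a := by
      rw [hT, Finset.sum_filter]
      apply Finset.sum_congr rfl
      intro j _
      split_ifs <;> ring
    have e2 : ∑ j ∈ T, ψ j a = ∫ b in ⋃ j ∈ T, U j, (f a - f b)^2 ∂γ := by
      rw [integral_biUnion_finset T (fun j _ => hUmeas j)
        (fun p _ q _ hpq => hUdisj hpq) (fun j _ => (hga a).integrableOn)]
      exact (Finset.sum_congr rfl fun j _ => (hψ j a).symm)
    rw [e1, e2]
    apply setIntegral_mono_set (hga a).integrableOn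
      (Filter.Eventually.of_forall fun b => sq_nonneg _)
    apply HasSubset.Subset.eventuallyLE
    intro b hb
    simp only [Set.mem_iUnion] at hb
    obtain ⟨j, hjT, hbj⟩ := hb
    rw [hT, Finset.mem_filter] at hjT
    have hd1 : dist b (x j) ≤ ε := Metric.mem_closedBall.mp (hUball j hbj)
    have hd2 : dist a (x i) ≤ ε := Metric.mem_closedBall.mp (hUball i ha)
    have hd3 : dist (x j) (x i) < h := by rw [dist_comm]; exact hjT.2
    rw [Metric.mem_ball]
    calc dist b a ≤ dist b (x j) + dist (x j) (x i) + dist (x i) a := dist_triangle4 b (x j) (x i) a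
      _ < ε + h + ε := by
        have hd4 : dist (x i) a ≤ ε := by rw [dist_comm]; exact hd2
        linarith
      _ = C := by rw [hC]; ring
  -- F and its integrability
  set F : X → ℝ := fun a => ∫ b in Metric.ball a C, (f a - f b)^2 ∂γ with hF
  have hFmeas : Measurable F := by
    have hA : Measurable (fun a => ∫ b in Metric.ball a C, (1:ℝ) ∂γ) :=
      meas_ball_integral γ _ (integrable_const 1) C
    have hB : Measurable (fun a => ∫ b in Metric.ball a C, f b ∂γ) :=
      meas_ball_integral γ f hf1 C
    have hD : Measurable (fun a => ∫ b in Metric.ball a C, f b ^ 2 ∂γ) :=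
      meas_ball_integral γ _ hf2 C
    have hA' : Measurable (fun a => (γ (Metric.ball a C)).toReal) := by
      have e : (fun a => (γ (Metric.ball a C)).toReal)
          = fun a => ∫ b in Metric.ball a C, (1:ℝ) ∂γ := by
        funext a; rw [setIntegral_const, measureReal_def, smul_eq_mul, mul_one]
      rw [e]; exact hA
    have he : F = fun a => (f a ^ 2 * (γ (Metric.ball a C)).toReal
        - 2 * f a * (∫ b in Metric.ball a C, f b ∂γ))
        + ∫ b in Metric.ball a C, f b ^ 2 ∂γ := by
      funext a
      calc F a = ∫ b in Metric.ball a C, ((f a ^ 2 - (2 * f a) * f b) + f b ^ 2) ∂γ := by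
            apply setIntegral_congr_fun Metric.isOpen_ball.measurableSet; intro b _; ring
        _ = (∫ b in Metric.ball a C, (f a ^ 2 - (2 * f a) * f b) ∂γ)
            + ∫ b in Metric.ball a C, f b ^ 2 ∂γ := by
            have hi5 : IntegrableOn (fun b => f a ^ 2 - (2 * f a) * f b) (Metric.ball a C) γ :=
              (hconst_int (f a ^ 2) _).sub (hf1.integrableOn.const_mul (2 * f a))
            exact integral_add hi5 hf2.integrableOn
        _ = _ := by
            have hi6 : IntegrableOn (fun b => (2 * f a) * f b) (Metric.ball a C) γ :=
              hf1.integrableOn.const_mul (2 * f a)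
            rw [integral_sub (hconst_int (f a ^ 2) _) hi6,
              setIntegral_const, measureReal_def, integral_const_mul, smul_eq_mul]
            ring
    rw [he]
    exact (((hfm.pow_const 2).mul hA').sub ((hfm.const_mul 2).mul hB)).add hD
  have hFnn : ∀ a, 0 ≤ F a := fun a => integral_nonneg fun b => sq_nonneg _
  set I1 := ∫ z, f z ∂γ with hI1
  set I2 := ∫ z, f z ^ 2 ∂γ with hI2
  have hFle : ∀ a, F a ≤ (f a ^ 2 - (2 * I1) * f a) + I2 := by
    intro a
    have h1 : F a ≤ ∫ b, (f a - f b)^2 ∂γ :=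
      setIntegral_le_integral (hga a) (Filter.Eventually.of_forall fun b => sq_nonneg _)
    have h2 : ∫ b, (f a - f b)^2 ∂γ = (f a ^ 2 - (2 * I1) * f a) + I2 := by
      calc ∫ b, (f a - f b)^2 ∂γ
          = ∫ b, ((f a ^ 2 - (2 * f a) * f b) + f b ^ 2) ∂γ := by
            congr 1; funext b; ring
        _ = (∫ b, (f a ^ 2 - (2 * f a) * f b) ∂γ) + I2 := by
            have hi7 : Integrable (fun b => f a ^ 2 - (2 * f a) * f b) γ :=
              (integrable_const (f a ^ 2)).sub (hf1.const_mul (2 * f a))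
            exact integral_add hi7 hf2
        _ = ((∫ _, (f a ^ 2 : ℝ) ∂γ) - ∫ b, (2 * f a) * f b ∂γ) + I2 := by
            have hi8 : Integrable (fun b => (2 * f a) * f b) γ :=
              hf1.const_mul (2 * f a)
            rw [integral_sub (integrable_const (f a ^ 2)) hi8]
        _ = _ := by
            rw [integral_const, measureReal_def, integral_const_mul, measure_univ, ENNReal.toReal_one,
              one_smul]
            ring
    linarith
  have hFint : Integrable F γ := by
    apply Integrable.mono' ((hf2.sub (hf1.const_mul (2 * I1))).add (integrable_const I2))
      hFmeas.aestronglyMeasurable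
    filter_upwards with a
    rw [Real.norm_eq_abs, abs_of_nonneg (hFnn a)]
    exact hFle a
  -- Final assembly
  have hRHS : ∫ a, ∫ b in {b | dist a b < h + 2*ε}, (f a - f b)^2 ∂γ ∂γ = ∫ a, F a ∂γ := by
    apply integral_congr_ae
    filter_upwards with a
    have hset : {b | dist a b < h + 2*ε} = Metric.ball a C := by
      ext b; simp [Metric.mem_ball, dist_comm, hC]
    rw [hset, hF]
  rw [hRHS]
  refine step4.trans ?_
  have h1 : ∀ i : Fin n, ∫ a in U i,
      (∑ j, (if dist (x i) (x j) < h then (1:ℝ) else 0) * ψ j a) ∂γ ≤ ∫ a in U i, F a ∂γ := by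
    intro i
    apply setIntegral_mono_on
      (integrable_finset_sum _ fun j _ => (hψ_int j).integrableOn.const_mul _)
      hFint.integrableOn (hUmeas i) (step5 i)
  calc ∑ i, ∫ a in U i,
        (∑ j, (if dist (x i) (x j) < h then (1:ℝ) else 0) * ψ j a) ∂γ
      ≤ ∑ i, ∫ a in U i, F a ∂γ := Finset.sum_le_sum fun i _ => h1 i
    _ = ∫ a in ⋃ i, U i, F a ∂γ :=
        (integral_iUnion_fintype hUmeas hUdisj fun i => hFint.integrableOn).symm
    _ = ∫ a, F a ∂γ := by rw [hUcover, Measure.restrict_univ]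

theorem stmt_9 {X : Type*} [MetricSpace X] [MeasurableSpace X] [BorelSpace X]
    (γ : Measure X) [IsProbabilityMeasure γ]
    (n : ℕ) (x : Fin n → X) (ε : ℝ) (hε : 0 < ε)
    (U : Fin n → Set X) (hUmeas : ∀ i, MeasurableSet (U i))
    (hUdisj : Pairwise (Function.onFun Disjoint U))
    (hUcover : (⋃ i, U i) = Set.univ)
    (hUmass : ∀ i, γ (U i) = 1 / n)
    (hUball : ∀ i, U i ⊆ Metric.closedBall (x i) ε)
    (f : X → ℝ) (hf : MemLp f 2 γ) (h : ℝ) (hh : 0 < h) :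
    (1 / (n : ℝ) ^ 2) * ∑ i, ∑ j,
        (if dist (x i) (x j) < h then (1 : ℝ) else 0) *
          ((n : ℝ) * ∫ z in U i, f z ∂γ - (n : ℝ) * ∫ z in U j, f z ∂γ) ^ 2
      ≤ ∫ a, ∫ b in {b | dist a b < h + 2 * ε}, (f a - f b) ^ 2 ∂γ ∂γ := by
  set g : X → ℝ := hf.1.mk f with hg
  have hae : f =ᵐ[γ] g := hf.1.ae_eq_mk
  have hgm : Measurable g := hf.1.stronglyMeasurable_mk.measurable
  have hgf : MemLp g 2 γ := hf.ae_eq hae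
  have hLHS : ∀ i : Fin n, ∫ z in U i, f z ∂γ = ∫ z in U i, g z ∂γ := by
    intro i
    apply setIntegral_congr_ae (hUmeas i)
    filter_upwards [hae] with z hz _
    exact hz
  have hRHS : ∫ a, ∫ b in {b | dist a b < h + 2*ε}, (f a - f b)^2 ∂γ ∂γ
      = ∫ a, ∫ b in {b | dist a b < h + 2*ε}, (g a - g b)^2 ∂γ ∂γ := by
    apply integral_congr_ae
    filter_upwards [hae] with a ha
    apply setIntegral_congr_ae
    · exact (isOpen_lt (Continuous.dist continuous_const continuous_id)
        continuous_const).measurableSet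
    · filter_upwards [hae] with b hb _
      rw [ha, hb]
  simp only [hLHS]
  rw [hRHS]
  exact stmt_9_main γ n x ε hε U hUmeas hUdisj hUcover hUmass hUball g hgf hgm h hh
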